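/- arXiv:2007.06875 — 3 statements merged into one kernel-verified Lean document; each statement's English description precedes it below -/
import Mathlib

section
/- If x(t) solves ẋ = A(t)x on [t₀, ∞), where A is a continuous matrix-valued function, then for all t ≥ t₀, ‖x(t)‖ ≤ ‖x(t₀)‖ · exp(∫_{t₀}^t μ[A(s)] ds). -/
open Filter Topology

section aux

variable {E : Type*} [NormedAddCommGroup E] [NormedSpace ℝ E]

/-- The logarithmic norm is 1-Lipschitz (one-sided version). -/
theorem logNorm_le_add {μ : (E →L[ℝ] E) → ℝ}
    (hμ : ∀ M : E →L[ℝ] E,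
      Tendsto (fun h : ℝ => (‖ContinuousLinearMap.id ℝ E + h • M‖ - 1) / h)
        (𝓝[>] 0) (𝓝 (μ M)))
    (M N : E →L[ℝ] E) : μ M ≤ μ N + ‖M - N‖ := by
  refine le_of_tendsto_of_tendsto (hμ M)
    (((hμ N).add tendsto_const_nhds : Tendsto _ _ (𝓝 (μ N + ‖M - N‖)))) ?_
  filter_upwards [self_mem_nhdsWithin] with h hh
  rw [Set.mem_Ioi] at hh
  have key : ‖ContinuousLinearMap.id ℝ E + h • M‖
      ≤ ‖ContinuousLinearMap.id ℝ E + h • N‖ + h * ‖M - N‖ := by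
    have : ContinuousLinearMap.id ℝ E + h • M
        = (ContinuousLinearMap.id ℝ E + h • N) + h • (M - N) := by
      rw [smul_sub]; abel
    rw [this]
    calc ‖(ContinuousLinearMap.id ℝ E + h • N) + h • (M - N)‖
        ≤ ‖ContinuousLinearMap.id ℝ E + h • N‖ + ‖h • (M - N)‖ := norm_add_le _ _
      _ ≤ ‖ContinuousLinearMap.id ℝ E + h • N‖ + h * ‖M - N‖ := by
          have hle := norm_smul_le h (M - N)
          rw [Real.norm_of_nonneg hh.le] at hle
          linarith
  calc (‖ContinuousLinearMap.id ℝ E + h • M‖ - 1) / h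
      ≤ (‖ContinuousLinearMap.id ℝ E + h • N‖ + h * ‖M - N‖ - 1) / h := by
        gcongr <;> linarith
    _ = (‖ContinuousLinearMap.id ℝ E + h • N‖ - 1) / h + ‖M - N‖ := by
        field_simp; ring

theorem logNorm_lipschitz {μ : (E →L[ℝ] E) → ℝ}
    (hμ : ∀ M : E →L[ℝ] E,
      Tendsto (fun h : ℝ => (‖ContinuousLinearMap.id ℝ E + h • M‖ - 1) / h)
        (𝓝[>] 0) (𝓝 (μ M))) :
    LipschitzWith 1 μ := by
  refine LipschitzWith.of_dist_le_mul fun M N => ?_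
  rw [Real.dist_eq, NNReal.coe_one, one_mul, dist_eq_norm]
  rw [abs_sub_le_iff]
  constructor
  · have := logNorm_le_add hμ M N
    linarith
  · have := logNorm_le_add hμ N M
    rw [← norm_neg, neg_sub] at this
    linarith

end aux

set_option maxHeartbeats 1000000 in
/-- if `x` solves `ẋ = A(t)x` on `[t₀,∞)` with `A` continuous, then
`‖x(t)‖ ≤ ‖x(t₀)‖ · exp(∫_{t₀}^t μ[A(s)] ds)` for all `t ≥ t₀`, where `μ` is the
logarithmic norm induced by the vector norm. -/
theorem stmt6 {E : Type*} [NormedAddCommGroup E] [NormedSpace ℝ E]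
    (t₀ : ℝ) (A : ℝ → (E →L[ℝ] E)) (hA : ContinuousOn A (Set.Ici t₀))
    (μ : (E →L[ℝ] E) → ℝ)
    (hμ : ∀ M : E →L[ℝ] E,
      Tendsto (fun h : ℝ => (‖ContinuousLinearMap.id ℝ E + h • M‖ - 1) / h)
        (𝓝[>] 0) (𝓝 (μ M)))
    (x : ℝ → E) (hx : ∀ t ≥ t₀, HasDerivAt x (A t (x t)) t) :
    ∀ t ≥ t₀, ‖x t‖ ≤ ‖x t₀‖ * Real.exp (∫ s in t₀..t, μ (A s)) := by
  intro t ht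
  have hμA : ContinuousOn (fun s => μ (A s)) (Set.Ici t₀) :=
    (logNorm_lipschitz hμ).continuous.comp_continuousOn hA
  -- continuity of x on Ici t₀
  have hxc : ContinuousOn x (Set.Icc t₀ t) := fun s hs =>
    ((hx s hs.1).continuousAt).continuousWithinAt
  -- interval integrability of μ ∘ A on subintervals
  have hInt : ∀ s ∈ Set.Icc t₀ t, IntervalIntegrable (fun u => μ (A u)) MeasureTheory.volume t₀ s := by
    intro s hs
    apply ContinuousOn.intervalIntegrable
    apply hμA.mono
    rw [Set.uIcc_of_le hs.1]
    exact fun u hu => hu.1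
  -- main estimate with ε
  have main : ∀ ε > 0, ‖x t‖ ≤ (‖x t₀‖ + ε) *
      Real.exp ((∫ s in t₀..t, μ (A s)) + ε * (t - t₀)) := by
    intro ε hε
    set B : ℝ → ℝ := fun s => (‖x t₀‖ + ε) *
      Real.exp (∫ u in t₀..s, (μ (A u) + ε)) with hBdef
    have hIntε : ∀ s ∈ Set.Icc t₀ t,
        IntervalIntegrable (fun u => μ (A u) + ε) MeasureTheory.volume t₀ s := fun s hs =>
      (hInt s hs).add intervalIntegrable_const
    have hB' : ∀ s ∈ Set.Ico t₀ t,
        HasDerivWithinAt B ((μ (A s) + ε) * B s) (Set.Ici s) s := by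
      intro s hs
      have hF : HasDerivWithinAt (fun u => ∫ v in t₀..u, (μ (A v) + ε)) (μ (A s) + ε)
          (Set.Ici s) s := by
        apply intervalIntegral.integral_hasDerivWithinAt_right
          (hIntε s ⟨hs.1, hs.2.le⟩)
        · refine ⟨Set.Ioc s t, Ioc_mem_nhdsGT_of_mem ⟨le_refl s, hs.2⟩, ?_⟩
          exact ((hμA.add continuousOn_const).mono
            (fun u hu => le_trans hs.1 hu.1.le)).aestronglyMeasurable
            measurableSet_Ioc
        · exact ((hμA.add continuousOn_const) s (Set.mem_Ici.mpr hs.1)).mono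
            (fun u hu => le_trans hs.1 hu.le)
      have h2 := ((hF.exp).const_mul (‖x t₀‖ + ε))
      refine h2.congr_deriv ?_
      show _ = (μ (A s) + ε) * ((‖x t₀‖ + ε) * Real.exp (∫ u in t₀..s, (μ (A u) + ε)))
      ring
    have hBc : ContinuousOn B (Set.Icc t₀ t) := by
      apply ContinuousOn.mul continuousOn_const
      apply Real.continuous_exp.comp_continuousOn
      have := intervalIntegral.continuousOn_primitive_interval'
        (μ := MeasureTheory.volume) (f := fun u => μ (A u) + ε)
        (hIntε t ⟨ht, le_refl t⟩) Set.left_mem_uIcc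
      rwa [Set.uIcc_of_le ht] at this
    have hBpos : ∀ s, 0 < B s := fun s =>
      mul_pos (by positivity) (Real.exp_pos _)
    -- Dini derivative bound
    have hf' : ∀ s ∈ Set.Ico t₀ t, ∀ r, μ (A s) * ‖x s‖ < r →
        ∃ᶠ z in 𝓝[>] s, slope (fun u => ‖x u‖) s z < r := by
      intro s hs r hr
      set v := A s (x s) with hv
      have hd : HasDerivAt x v s := hx s hs.1
      -- remainder term tends to 0
      have hrem : Tendsto (fun z => ‖z - s‖⁻¹ * ‖x z - x s - (z - s) • v‖) (𝓝 s) (𝓝 0) :=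
        hasDerivAt_iff_tendsto.mp hd
      -- map z ↦ z - s : 𝓝[>] s → 𝓝[>] 0
      have hmap : Tendsto (fun z => z - s) (𝓝[>] s) (𝓝[>] (0 : ℝ)) := by
        rw [tendsto_nhdsWithin_iff]
        constructor
        · have : Tendsto (fun z => z - s) (𝓝 s) (𝓝 (s - s)) :=
            (continuous_id.sub continuous_const).tendsto s
          rw [sub_self] at this
          exact this.mono_left nhdsWithin_le_nhds
        · exact eventually_mem_nhdsWithin.mono fun z hz => by
            simpa [Set.mem_Ioi, sub_pos] using hz
      have h1 : Tendsto (fun z => (‖ContinuousLinearMap.id ℝ E + (z - s) • A s‖ - 1) / (z - s)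
            * ‖x s‖) (𝓝[>] s) (𝓝 (μ (A s) * ‖x s‖)) :=
        (((hμ (A s)).comp hmap).mul_const _)
      have h2 : Tendsto (fun z => ‖z - s‖⁻¹ * ‖x z - x s - (z - s) • v‖) (𝓝[>] s) (𝓝 0) :=
        hrem.mono_left nhdsWithin_le_nhds
      have hsum : Tendsto (fun z => (‖ContinuousLinearMap.id ℝ E + (z - s) • A s‖ - 1) / (z - s)
            * ‖x s‖ + ‖z - s‖⁻¹ * ‖x z - x s - (z - s) • v‖) (𝓝[>] s) (𝓝 (μ (A s) * ‖x s‖)) := by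
        simpa using h1.add h2
      have hev : ∀ᶠ z in 𝓝[>] s, slope (fun u => ‖x u‖) s z
          ≤ (‖ContinuousLinearMap.id ℝ E + (z - s) • A s‖ - 1) / (z - s) * ‖x s‖
            + ‖z - s‖⁻¹ * ‖x z - x s - (z - s) • v‖ := by
        filter_upwards [eventually_mem_nhdsWithin] with z hz
        rw [Set.mem_Ioi] at hz
        have hzs : 0 < z - s := sub_pos.mpr hz
        rw [slope_def_field]
        have key : ‖x z‖ - ‖x s‖ ≤ (‖ContinuousLinearMap.id ℝ E + (z - s) • A s‖ - 1) * ‖x s‖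
            + ‖x z - x s - (z - s) • v‖ := by
          have e1 : ‖x s + (z - s) • v‖
              ≤ ‖ContinuousLinearMap.id ℝ E + (z - s) • A s‖ * ‖x s‖ := by
            have : x s + (z - s) • v = (ContinuousLinearMap.id ℝ E + (z - s) • A s) (x s) := by
              simp [hv]
            rw [this]
            exact (ContinuousLinearMap.le_opNorm _ _)
          have e2 : ‖x z‖ ≤ ‖x s + (z - s) • v‖ + ‖x z - x s - (z - s) • v‖ := by
            have h3 := norm_sub_norm_le (x z) (x s + (z - s) • v)
            have h4 : x z - (x s + (z - s) • v) = x z - x s - (z - s) • v := by abel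
            rw [h4] at h3
            linarith
          nlinarith [norm_nonneg (x s)]
        rw [div_eq_mul_inv, div_eq_mul_inv, Real.norm_of_nonneg hzs.le]
        calc (‖x z‖ - ‖x s‖) * (z - s)⁻¹
            ≤ ((‖ContinuousLinearMap.id ℝ E + (z - s) • A s‖ - 1) * ‖x s‖
              + ‖x z - x s - (z - s) • v‖) * (z - s)⁻¹ := by
              apply mul_le_mul_of_nonneg_right key (inv_nonneg.mpr hzs.le)
          _ = (‖ContinuousLinearMap.id ℝ E + (z - s) • A s‖ - 1) * (z - s)⁻¹ * ‖x s‖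
              + (z - s)⁻¹ * ‖x z - x s - (z - s) • v‖ := by ring
        -- match shapes
      have hlt : ∀ᶠ z in 𝓝[>] s, (‖ContinuousLinearMap.id ℝ E + (z - s) • A s‖ - 1) / (z - s)
            * ‖x s‖ + ‖z - s‖⁻¹ * ‖x z - x s - (z - s) • v‖ < r :=
        hsum.eventually (Filter.Tendsto.eventually_lt_const hr tendsto_id) |>.mono (fun z hz => hz)
      exact ((hev.and hlt).mono fun z hz => lt_of_le_of_lt hz.1 hz.2).frequently
    -- apply fencing theorem
    have hnorm : ContinuousOn (fun u => ‖x u‖) (Set.Icc t₀ t) :=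
      continuous_norm.comp_continuousOn hxc
    have ha0 : (fun u => ‖x u‖) t₀ ≤ B t₀ := by
      simp only [hBdef, intervalIntegral.integral_same, Real.exp_zero, mul_one]
      linarith
    have hbound : ∀ s ∈ Set.Ico t₀ t, (fun u => ‖x u‖) s = B s →
        μ (A s) * ‖x s‖ < (μ (A s) + ε) * B s := by
      intro s hs heq
      have heq' : ‖x s‖ = B s := heq
      rw [heq']
      have := hBpos s
      nlinarith
    have hfence : ∀ ⦃s : ℝ⦄, s ∈ Set.Icc t₀ t → ‖x s‖ ≤ B s :=
      image_le_of_liminf_slope_right_lt_deriv_boundary' hnorm hf' ha0 hBc hB' hbound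
    calc ‖x t‖ ≤ B t := hfence (Set.right_mem_Icc.mpr ht)
      _ = (‖x t₀‖ + ε) * Real.exp ((∫ s in t₀..t, μ (A s)) + ε * (t - t₀)) := by
        have hi : (∫ u in t₀..t, (μ (A u) + ε)) = (∫ s in t₀..t, μ (A s)) + ε * (t - t₀) := by
          rw [intervalIntegral.integral_add (hInt t ⟨ht, le_refl t⟩) intervalIntegrable_const,
            intervalIntegral.integral_const, smul_eq_mul, mul_comm]
        simp only [hBdef, hi]
  -- let ε → 0⁺
  set T := ∫ s in t₀..t, μ (A s) with hT
  have hlim : Tendsto (fun ε : ℝ => (‖x t₀‖ + ε) * Real.exp (T + ε * (t - t₀)))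
      (𝓝[>] (0 : ℝ)) (𝓝 (‖x t₀‖ * Real.exp T)) := by
    have : ContinuousAt (fun ε : ℝ => (‖x t₀‖ + ε) * Real.exp (T + ε * (t - t₀))) 0 := by
      fun_prop
    have h0 := this.tendsto.mono_left (nhdsWithin_le_nhds (s := Set.Ioi (0:ℝ)))
    simpa using h0
  refine ge_of_tendsto hlim ?_
  filter_upwards [self_mem_nhdsWithin] with ε hε
  exact main ε hε
end

section
/- Consider ẋ = [A(t) + Δ(t) + BK(t)]x on [t₀,∞), with A, Δ, K continuous matrix functions and B constant. If ∫_{t₀}^∞ |μ[Δ(s)]| ds < ∞ and limsup_{t→∞} ∫_{t₀}^t μ[A(s) + BK(s)] ds < ∞, then every solution is bounded on [t₀,∞) (i.e., the system is stable). -/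
open Filter Topology MeasureTheory

section StabilityAux

variable {E : Type*} [NormedAddCommGroup E] [NormedSpace ℝ E]

private theorem stmt10_mu_le_norm (μ : (E →L[ℝ] E) → ℝ)
    (hμ : ∀ M : E →L[ℝ] E,
      Tendsto (fun h : ℝ => (‖ContinuousLinearMap.id ℝ E + h • M‖ - 1) / h)
        (𝓝[>] 0) (𝓝 (μ M))) (M : E →L[ℝ] E) : μ M ≤ ‖M‖ := by
  refine le_of_tendsto (hμ M) ?_
  filter_upwards [self_mem_nhdsWithin] with h hh
  have hh' : (0:ℝ) < h := hh
  have hb : ‖ContinuousLinearMap.id ℝ E + h • M‖ ≤ 1 + h * ‖M‖ := by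
    calc ‖ContinuousLinearMap.id ℝ E + h • M‖ ≤ ‖ContinuousLinearMap.id ℝ E‖ + ‖h • M‖ :=
          norm_add_le _ _
      _ ≤ 1 + h * ‖M‖ := by
          have h1 := ContinuousLinearMap.norm_id_le (E := E) (𝕜 := ℝ)
          have h2 : ‖h • M‖ = h * ‖M‖ := by
            have := norm_smul h M
            rwa [Real.norm_eq_abs, abs_of_pos hh'] at this
          linarith
  rw [div_le_iff₀ hh']
  linarith [mul_comm h ‖M‖]

private theorem stmt10_mu_subadd (μ : (E →L[ℝ] E) → ℝ)
    (hμ : ∀ M : E →L[ℝ] E,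
      Tendsto (fun h : ℝ => (‖ContinuousLinearMap.id ℝ E + h • M‖ - 1) / h)
        (𝓝[>] 0) (𝓝 (μ M))) (M N : E →L[ℝ] E) : μ (M + N) ≤ μ M + μ N := by
  have h2 : Tendsto (fun h : ℝ => 2 * h) (𝓝[>] (0:ℝ)) (𝓝[>] (0:ℝ)) := by
    apply tendsto_nhdsWithin_of_tendsto_nhds_of_eventually_within
    · have : Tendsto (fun h : ℝ => 2 * h) (𝓝 0) (𝓝 (2 * 0)) :=
        (continuous_const.mul continuous_id).tendsto 0
      simpa using this.mono_left nhdsWithin_le_nhds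
    · filter_upwards [self_mem_nhdsWithin] with h hh
      exact mul_pos two_pos (Set.mem_Ioi.1 hh)
  have hM2 := (hμ M).comp h2
  have hN2 := (hμ N).comp h2
  refine le_of_tendsto_of_tendsto (hμ (M + N)) (hM2.add hN2) ?_
  filter_upwards [self_mem_nhdsWithin] with h hh
  have hh' : (0:ℝ) < h := hh
  have key : ContinuousLinearMap.id ℝ E + h • (M + N) =
      (2⁻¹ : ℝ) • (ContinuousLinearMap.id ℝ E + (2 * h) • M)
        + (2⁻¹ : ℝ) • (ContinuousLinearMap.id ℝ E + (2 * h) • N) := by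
    module
  have hn : ‖ContinuousLinearMap.id ℝ E + h • (M + N)‖ ≤
      (‖ContinuousLinearMap.id ℝ E + (2 * h) • M‖
        + ‖ContinuousLinearMap.id ℝ E + (2 * h) • N‖) / 2 := by
    rw [key]
    have := norm_add_le ((2⁻¹ : ℝ) • (ContinuousLinearMap.id ℝ E + (2 * h) • M))
      ((2⁻¹ : ℝ) • (ContinuousLinearMap.id ℝ E + (2 * h) • N))
    have e1 : ‖(2⁻¹ : ℝ) • (ContinuousLinearMap.id ℝ E + (2 * h) • M)‖
        = 2⁻¹ * ‖ContinuousLinearMap.id ℝ E + (2 * h) • M‖ := by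
      have := norm_smul (2⁻¹:ℝ) (ContinuousLinearMap.id ℝ E + (2 * h) • M)
      rwa [Real.norm_eq_abs, abs_of_pos (by norm_num : (0:ℝ) < 2⁻¹)] at this
    have e2 : ‖(2⁻¹ : ℝ) • (ContinuousLinearMap.id ℝ E + (2 * h) • N)‖
        = 2⁻¹ * ‖ContinuousLinearMap.id ℝ E + (2 * h) • N‖ := by
      have := norm_smul (2⁻¹:ℝ) (ContinuousLinearMap.id ℝ E + (2 * h) • N)
      rwa [Real.norm_eq_abs, abs_of_pos (by norm_num : (0:ℝ) < 2⁻¹)] at this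
    rw [e1, e2] at this
    linarith
  show (‖ContinuousLinearMap.id ℝ E + h • (M + N)‖ - 1) / h ≤
    (‖ContinuousLinearMap.id ℝ E + (2*h) • M‖ - 1) / (2*h)
      + (‖ContinuousLinearMap.id ℝ E + (2*h) • N‖ - 1) / (2*h)
  rw [← add_div, div_le_div_iff₀ hh' (by linarith)]
  nlinarith [mul_le_mul_of_nonneg_right hn hh'.le]

private theorem stmt10_mu_continuous (μ : (E →L[ℝ] E) → ℝ)
    (hμ : ∀ M : E →L[ℝ] E,
      Tendsto (fun h : ℝ => (‖ContinuousLinearMap.id ℝ E + h • M‖ - 1) / h)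
        (𝓝[>] 0) (𝓝 (μ M))) : Continuous μ := by
  have hlip : ∀ M N : E →L[ℝ] E, μ M - μ N ≤ ‖M - N‖ := by
    intro M N
    have h1 := stmt10_mu_subadd μ hμ (M - N) N
    rw [sub_add_cancel] at h1
    have := stmt10_mu_le_norm μ hμ (M - N)
    linarith
  refine (LipschitzWith.of_dist_le_mul (K := 1) ?_).continuous
  intro M N
  rw [NNReal.coe_one, one_mul, Real.dist_eq, dist_eq_norm, abs_sub_le_iff]
  exact ⟨hlip M N, by simpa [norm_sub_rev] using hlip N M⟩

private theorem stmt10_slope (μ : (E →L[ℝ] E) → ℝ)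
    (hμ : ∀ M : E →L[ℝ] E,
      Tendsto (fun h : ℝ => (‖ContinuousLinearMap.id ℝ E + h • M‖ - 1) / h)
        (𝓝[>] 0) (𝓝 (μ M)))
    (x : ℝ → E) (t : ℝ) (N : E →L[ℝ] E) (hx : HasDerivAt x (N (x t)) t)
    (r : ℝ) (hr : μ N * ‖x t‖ < r) :
    ∀ᶠ z in 𝓝[>] t, slope (norm ∘ x) t z < r := by
  set v := N (x t) with hv
  have hshift : Tendsto (fun z : ℝ => z - t) (𝓝[>] t) (𝓝[>] (0:ℝ)) := by
    apply tendsto_nhdsWithin_of_tendsto_nhds_of_eventually_within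
    · have : Tendsto (fun z : ℝ => z - t) (𝓝 t) (𝓝 (t - t)) :=
        (continuous_id.sub continuous_const).tendsto t
      simpa using this.mono_left nhdsWithin_le_nhds
    · filter_upwards [self_mem_nhdsWithin] with z hz
      exact sub_pos.2 (Set.mem_Ioi.1 hz)
  have h1 : Tendsto (fun z : ℝ =>
      ((‖ContinuousLinearMap.id ℝ E + (z - t) • N‖ - 1) / (z - t)) * ‖x t‖
        + ‖slope x t z - v‖) (𝓝[>] t) (𝓝 (μ N * ‖x t‖ + 0)) := by
    have ha := ((hμ N).comp hshift).mul_const ‖x t‖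
    have hb : Tendsto (slope x t) (𝓝[>] t) (𝓝 v) :=
      (hasDerivAt_iff_tendsto_slope.1 hx).mono_left
        (nhdsWithin_mono t fun z hz => ne_of_gt hz)
    have hc : Tendsto (fun z => ‖slope x t z - v‖) (𝓝[>] t) (𝓝 0) := by
      have h0 : Tendsto (fun z => slope x t z - v) (𝓝[>] t) (𝓝 (v - v)) :=
        hb.sub tendsto_const_nhds
      rw [sub_self] at h0
      simpa using h0.norm
    exact ha.add hc
  rw [add_zero] at h1
  have h2 : ∀ᶠ z in 𝓝[>] t,
      slope (norm ∘ x) t z ≤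
        ((‖ContinuousLinearMap.id ℝ E + (z - t) • N‖ - 1) / (z - t)) * ‖x t‖
          + ‖slope x t z - v‖ := by
    filter_upwards [self_mem_nhdsWithin] with z hz
    have hzt : (0:ℝ) < z - t := sub_pos.2 hz
    have hne : z - t ≠ 0 := ne_of_gt hzt
    have h4 : slope x t z - v = (z - t)⁻¹ • (x z - x t - (z - t) • v) := by
      rw [slope_def_module]
      match_scalars <;> field_simp
    have e1 : ‖slope x t z - v‖ = ‖x z - x t - (z - t) • v‖ / (z - t) := by
      rw [h4]
      have := norm_smul ((z - t)⁻¹) (x z - x t - (z - t) • v)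
      rw [this, Real.norm_eq_abs, abs_of_pos (inv_pos.2 hzt), div_eq_inv_mul]
    have e2 : ‖x t + (z - t) • v‖ ≤ ‖ContinuousLinearMap.id ℝ E + (z - t) • N‖ * ‖x t‖ := by
      have : (ContinuousLinearMap.id ℝ E + (z - t) • N) (x t) = x t + (z - t) • v := by
        simp [hv]
      rw [← this]
      exact (ContinuousLinearMap.id ℝ E + (z - t) • N).le_opNorm (x t)
    have e3 : ‖x z‖ ≤ ‖x t + (z - t) • v‖ + ‖x z - x t - (z - t) • v‖ :=
      calc ‖x z‖ = ‖(x t + (z - t) • v) + (x z - x t - (z - t) • v)‖ := by congr 1; abel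
        _ ≤ _ := norm_add_le _ _
    have hs : slope (norm ∘ x) t z = (‖x z‖ - ‖x t‖) / (z - t) := by
      rw [slope_def_field]; rfl
    rw [hs, e1, div_mul_eq_mul_div, ← add_div, div_le_div_iff₀ hzt hzt]
    nlinarith [e2, e3, hzt]
  have h3 := (tendsto_order.1 h1).2 r hr
  filter_upwards [h2, h3] with z hz1 hz2
  exact lt_of_le_of_lt hz1 hz2

private theorem stmt10_gronwall (x : ℝ → E) (m : ℝ → ℝ) (hm : Continuous m)
    (a b : ℝ) (hab : a ≤ b) (hcont : ContinuousOn x (Set.Icc a b))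
    (hslope : ∀ t ∈ Set.Ico a b, ∀ r, m t * ‖x t‖ < r →
      ∃ᶠ z in 𝓝[>] t, slope (norm ∘ x) t z < r) :
    ‖x b‖ ≤ ‖x a‖ * Real.exp (∫ s in a..b, m s) := by
  set G : ℝ → ℝ := fun t => ∫ s in a..t, m s with hGdef
  have hG : ∀ t : ℝ, HasDerivAt G (m t) t := fun t =>
    intervalIntegral.integral_hasDerivAt_right (hm.intervalIntegrable a t)
      (hm.stronglyMeasurableAtFilter _ _) hm.continuousAt
  have main : ∀ ε > (0:ℝ), ‖x b‖ ≤ (‖x a‖ + ε) * Real.exp (G b + ε * (b - a)) := by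
    intro ε hε
    have hB : ∀ t : ℝ, HasDerivAt (fun t => (‖x a‖ + ε) * Real.exp (G t + ε * (t - a)))
        ((m t + ε) * ((‖x a‖ + ε) * Real.exp (G t + ε * (t - a)))) t := by
      intro t
      have h2 : HasDerivAt (fun t : ℝ => ε * (t - a)) ε t := by
        simpa using ((hasDerivAt_id t).sub_const a).const_mul ε
      have hinner : HasDerivAt (fun t => G t + ε * (t - a)) (m t + ε) t := (hG t).add h2
      have hexp := hinner.exp
      have := hexp.const_mul (‖x a‖ + ε)
      exact this.congr_deriv (by ring)
    have ha : ‖x a‖ ≤ (‖x a‖ + ε) * Real.exp (G a + ε * (a - a)) := by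
      have : G a = 0 := intervalIntegral.integral_same
      rw [this]
      simp only [sub_self, mul_zero, add_zero, zero_add, Real.exp_zero, mul_one]
      linarith
    have hres := image_norm_le_of_liminf_right_slope_norm_lt_deriv_boundary
      (f := x) (f' := fun t => m t * ‖x t‖) (a := a) (b := b)
      hcont hslope ha
      (fun t _ => (hB t).continuousAt.continuousWithinAt)
      (fun t _ => (hB t).hasDerivWithinAt)
      ?_ ⟨hab, le_rfl⟩
    · exact hres
    · intro t _ hxB
      have hpos : 0 < (‖x a‖ + ε) * Real.exp (G t + ε * (t - a)) :=
        mul_pos (by positivity) (Real.exp_pos _)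
      show m t * ‖x t‖ < (m t + ε) * ((‖x a‖ + ε) * Real.exp (G t + ε * (t - a)))
      rw [hxB]
      nlinarith
  have hF : Tendsto (fun ε : ℝ => (‖x a‖ + ε) * Real.exp (G b + ε * (b - a)))
      (𝓝[>] (0:ℝ)) (𝓝 (‖x a‖ * Real.exp (G b))) := by
    have hc : Continuous fun ε : ℝ => (‖x a‖ + ε) * Real.exp (G b + ε * (b - a)) := by
      continuity
    have := (hc.tendsto 0).mono_left (nhdsWithin_le_nhds (s := Set.Ioi (0:ℝ)))
    simpa using this
  refine ge_of_tendsto hF ?_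
  filter_upwards [self_mem_nhdsWithin] with ε hε
  exact main ε hε

end StabilityAux

/-- for `ẋ = [A(t) + Δ(t) + BK(t)]x` on `[t₀,∞)`, if
`∫_{t₀}^∞ |μ[Δ(s)]| ds < ∞` and `limsup_{t→∞} ∫_{t₀}^t μ[A(s)+BK(s)] ds < ∞`
(i.e. the integrals are eventually bounded above by some constant `C`),
then every solution is bounded on `[t₀,∞)` (stability). -/
theorem stmt10 {E : Type*} [NormedAddCommGroup E] [NormedSpace ℝ E]
    (t₀ : ℝ) (A Δ K : ℝ → (E →L[ℝ] E)) (B : E →L[ℝ] E)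
    (hA : ContinuousOn A (Set.Ici t₀)) (hΔ : ContinuousOn Δ (Set.Ici t₀))
    (hK : ContinuousOn K (Set.Ici t₀))
    (μ : (E →L[ℝ] E) → ℝ)
    (hμ : ∀ M : E →L[ℝ] E,
      Tendsto (fun h : ℝ => (‖ContinuousLinearMap.id ℝ E + h • M‖ - 1) / h)
        (𝓝[>] 0) (𝓝 (μ M)))
    (hA1 : IntegrableOn (fun s => |μ (Δ s)|) (Set.Ici t₀))
    (hA2 : ∃ C : ℝ, ∀ᶠ t in atTop, (∫ s in t₀..t, μ (A s + B ∘L K s)) ≤ C) :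
    ∀ x : ℝ → E, (∀ t ≥ t₀, HasDerivAt x ((A t + Δ t + B ∘L K t) (x t)) t) →
      ∃ M : ℝ, ∀ t ≥ t₀, ‖x t‖ ≤ M := by
  intro x hx
  have hμcont := stmt10_mu_continuous μ hμ
  -- continuous extensions via `max t t₀`
  have cmax : Continuous fun t : ℝ => max t t₀ := continuous_id.max continuous_const
  have hmem : ∀ t : ℝ, max t t₀ ∈ Set.Ici t₀ := fun t => Set.mem_Ici.2 (le_max_right _ _)
  have hA' : Continuous fun t : ℝ => A (max t t₀) := hA.comp_continuous cmax hmem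
  have hΔ' : Continuous fun t : ℝ => Δ (max t t₀) := hΔ.comp_continuous cmax hmem
  have hK' : Continuous fun t : ℝ => K (max t t₀) := hK.comp_continuous cmax hmem
  have hBK' : Continuous fun t : ℝ => B ∘L K (max t t₀) := by
    have := (ContinuousLinearMap.compL ℝ E E E B).continuous.comp hK'
    exact this
  set n : ℝ → (E →L[ℝ] E) := fun t => A (max t t₀) + Δ (max t t₀) + B ∘L K (max t t₀)
    with hndef
  have hn : Continuous n := (hA'.add hΔ').add hBK'
  set m : ℝ → ℝ := fun t => μ (n t) with hmdef
  have hm : Continuous m := hμcont.comp hn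
  set ak : ℝ → ℝ := fun t => μ (A (max t t₀) + B ∘L K (max t t₀)) with hakdef
  have hak : Continuous ak := hμcont.comp (hA'.add hBK')
  have hxd : ∀ t ≥ t₀, HasDerivAt x (n t (x t)) t := by
    intro t ht
    have hnt : n t = A t + Δ t + B ∘L K t := by
      simp only [hndef, max_eq_left ht]
    rw [hnt]
    exact hx t ht
  -- Grönwall bound
  have key : ∀ b ≥ t₀, ‖x b‖ ≤ ‖x t₀‖ * Real.exp (∫ s in t₀..b, m s) := by
    intro b hb
    refine stmt10_gronwall x m hm t₀ b hb ?_ ?_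
    · exact fun t ht => ((hxd t ht.1).continuousAt).continuousWithinAt
    · intro t ht r hr
      exact (stmt10_slope μ hμ x t (n t) (hxd t ht.1) r hr).frequently
  -- bound on the integral of `m`
  set J : ℝ := ∫ s in Set.Ici t₀, |μ (Δ s)| with hJdef
  have hμsub := stmt10_mu_subadd μ hμ
  have hmb : ∀ b ≥ t₀, (∫ s in t₀..b, m s) ≤ (∫ s in t₀..b, ak s) + J := by
    intro b hb
    have hintm : IntervalIntegrable m volume t₀ b := hm.intervalIntegrable _ _
    have hintak : IntervalIntegrable ak volume t₀ b := hak.intervalIntegrable _ _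
    have hintΔ : IntervalIntegrable (fun s => |μ (Δ s)|) volume t₀ b := by
      rw [intervalIntegrable_iff_integrableOn_Ioc_of_le hb]
      exact hA1.mono_set (Set.Ioc_subset_Icc_self.trans (Set.Icc_subset_Ici_self))
    have h5 : (∫ s in t₀..b, m s) ≤ ∫ s in t₀..b, (ak s + |μ (Δ s)|) := by
      refine intervalIntegral.integral_mono_on hb hintm (hintak.add hintΔ) ?_
      intro s hs
      have hs1 : t₀ ≤ s := hs.1
      have hns : n s = (A s + B ∘L K s) + Δ s := by
        simp only [hndef, max_eq_left hs1]
        abel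
      have : m s ≤ μ (A s + B ∘L K s) + μ (Δ s) := by
        rw [hmdef]; dsimp only; rw [hns]; exact hμsub _ _
      have hak' : ak s = μ (A s + B ∘L K s) := by
        simp only [hakdef, max_eq_left hs1]
      rw [hak']
      exact this.trans (by linarith [le_abs_self (μ (Δ s))])
    have h6 : (∫ s in t₀..b, (ak s + |μ (Δ s)|))
        = (∫ s in t₀..b, ak s) + ∫ s in t₀..b, |μ (Δ s)| :=
      intervalIntegral.integral_add hintak hintΔ
    have h7 : (∫ s in t₀..b, |μ (Δ s)|) ≤ J := by
      rw [intervalIntegral.integral_of_le hb, hJdef]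
      refine setIntegral_mono_set hA1 ?_ ?_
      · exact Filter.Eventually.of_forall fun s => abs_nonneg _
      · exact HasSubset.Subset.eventuallyLE (Set.Ioc_subset_Icc_self.trans (Set.Icc_subset_Ici_self))
    linarith
  -- uniform bound of `∫ ak`
  obtain ⟨C, hC⟩ := hA2
  rw [eventually_atTop] at hC
  obtain ⟨T, hT⟩ := hC
  have hGak : ∀ u : ℝ, HasDerivAt (fun b => ∫ s in t₀..b, ak s) (ak u) u := fun u =>
    intervalIntegral.integral_hasDerivAt_right (hak.intervalIntegrable t₀ u)
      (hak.stronglyMeasurableAtFilter _ _) hak.continuousAt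
  have hGakc : Continuous fun b => ∫ s in t₀..b, ak s :=
    continuous_iff_continuousAt.2 fun u => (hGak u).continuousAt
  have hGeq : ∀ b ≥ t₀, (∫ s in t₀..b, ak s) = ∫ s in t₀..b, μ (A s + B ∘L K s) := by
    intro b hb
    refine intervalIntegral.integral_congr ?_
    intro s hs
    rw [Set.uIcc_of_le hb] at hs
    simp only [hakdef, max_eq_left hs.1]
  obtain ⟨z, hzmem, hz⟩ := (isCompact_Icc (a := t₀) (b := max T t₀)).exists_isMaxOn
    (Set.nonempty_Icc.2 (le_max_right T t₀)) hGakc.continuousOn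
  set C' : ℝ := max C (∫ s in t₀..z, ak s) with hC'def
  have hCb : ∀ b ≥ t₀, (∫ s in t₀..b, ak s) ≤ C' := by
    intro b hb
    by_cases hbT : b ≤ max T t₀
    · exact (hz ⟨hb, hbT⟩).trans (le_max_right _ _)
    · have hTb : T ≤ b := (le_max_left T t₀).trans (le_of_not_ge hbT)
      rw [hGeq b hb]
      exact (hT b hTb).trans (le_max_left _ _)
  -- conclusion
  refine ⟨‖x t₀‖ * Real.exp (C' + J), ?_⟩
  intro t ht
  refine (key t ht).trans ?_
  refine mul_le_mul_of_nonneg_left (Real.exp_le_exp.2 ?_) (norm_nonneg _)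
  have := hmb t ht
  have := hCb t ht
  linarith
end

section
/- Consider ẋ = [A(t) + Δ(t) + BK(t)]x + ω(x,t) on [t₀,∞), with A, Δ, K continuous, B constant, and ω continuous. Assume (A1) ∫_{t₀}^∞ |μ[Δ(s)]| ds < ∞; (A2) μ[A(t)+BK(t)] < 0 for all sufficiently large t; (A3) there is a continuous function ω̃ with ‖ω(x,t)‖ ≤ ‖ω̃(t)‖ for all x, t and ‖ω̃(t)‖/μ[A(t)+BK(t)] → 0 as t → ∞; (A4) ∫_{t₀}^t μ[A(s)+BK(s)] ds → −∞. Then every solution x(t) satisfies x(t) → 0 as t → ∞. -/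
open Filter Topology MeasureTheory


section mu
variable {E : Type*} [NormedAddCommGroup E] [NormedSpace ℝ E]
  (μ : (E →L[ℝ] E) → ℝ)
  (hμ : ∀ M : E →L[ℝ] E,
      Tendsto (fun h : ℝ => (‖ContinuousLinearMap.id ℝ E + h • M‖ - 1) / h)
        (𝓝[>] 0) (𝓝 (μ M)))

include hμ

theorem mu_lip : ∀ M N : E →L[ℝ] E, μ M - μ N ≤ ‖M - N‖ := by
  intro M N
  have key : Tendsto (fun h : ℝ =>
      (‖ContinuousLinearMap.id ℝ E + h • M‖ - 1) / h - (‖ContinuousLinearMap.id ℝ E + h • N‖ - 1) / h)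
      (𝓝[>] 0) (𝓝 (μ M - μ N)) := (hμ M).sub (hμ N)
  refine le_of_tendsto key ?_
  filter_upwards [self_mem_nhdsWithin] with h (hh : 0 < h)
  have e1 : (ContinuousLinearMap.id ℝ E + h • M) - (ContinuousLinearMap.id ℝ E + h • N) = h • (M - N) := by
    rw [smul_sub]; abel
  have hns : ‖h • (M - N)‖ ≤ h * ‖M - N‖ := by
    have := norm_smul_le h (M - N)
    rwa [Real.norm_eq_abs, abs_of_pos hh] at this
  have h1 : ‖ContinuousLinearMap.id ℝ E + h • M‖ - ‖ContinuousLinearMap.id ℝ E + h • N‖ ≤ h * ‖M - N‖ := by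
    calc ‖ContinuousLinearMap.id ℝ E + h • M‖ - ‖ContinuousLinearMap.id ℝ E + h • N‖
        ≤ ‖(ContinuousLinearMap.id ℝ E + h • M) - (ContinuousLinearMap.id ℝ E + h • N)‖ :=
          norm_sub_norm_le _ _
      _ ≤ h * ‖M - N‖ := by rw [e1]; exact hns
  rw [div_sub_div_same, div_le_iff₀ hh]
  nlinarith
  
theorem mu_lipschitz : LipschitzWith 1 μ := by
  refine LipschitzWith.of_dist_le_mul fun M N => ?_
  rw [Real.dist_eq, NNReal.coe_one, one_mul, dist_eq_norm]
  rcases abs_cases (μ M - μ N) with ⟨h, _⟩ | ⟨h, _⟩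
  · rw [h]; exact mu_lip μ hμ M N
  · rw [h, norm_sub_rev]
    have := mu_lip μ hμ N M
    linarith

theorem mu_add_le (M N : E →L[ℝ] E) : μ (M + N) ≤ μ M + μ N := by
  have h2 : Tendsto (fun h : ℝ => (2 : ℝ) * h) (𝓝[>] 0) (𝓝[>] 0) := by
    apply tendsto_nhdsWithin_of_tendsto_nhds_of_eventually_within
    · have : Tendsto (fun h : ℝ => (2 : ℝ) * h) (𝓝 0) (𝓝 (2 * 0)) :=
        (continuous_const.mul continuous_id).tendsto 0
      simpa using this.mono_left nhdsWithin_le_nhds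
    · filter_upwards [self_mem_nhdsWithin] with h (hh : 0 < h)
      exact mul_pos two_pos hh
  have hM := (hμ M).comp h2
  have hN := (hμ N).comp h2
  refine le_of_tendsto_of_tendsto (hμ (M + N)) (hM.add hN) ?_
  filter_upwards [self_mem_nhdsWithin] with h (hh : 0 < h)
  simp only [Function.comp_apply, Pi.add_apply]
  set a := ‖ContinuousLinearMap.id ℝ E + (2 * h) • M‖ with ha
  set b := ‖ContinuousLinearMap.id ℝ E + (2 * h) • N‖ with hb
  have hx : ‖ContinuousLinearMap.id ℝ E + h • (M + N)‖ ≤ (a + b) / 2 := by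
    have e : ContinuousLinearMap.id ℝ E + h • (M + N)
        = (2⁻¹ : ℝ) • ((ContinuousLinearMap.id ℝ E + (2 * h) • M) + (ContinuousLinearMap.id ℝ E + (2 * h) • N)) := by
      module
    rw [e]
    have h1 := norm_smul_le ((2:ℝ)⁻¹) ((ContinuousLinearMap.id ℝ E + (2 * h) • M) + (ContinuousLinearMap.id ℝ E + (2 * h) • N))
    have h2 := norm_add_le (ContinuousLinearMap.id ℝ E + (2 * h) • M) (ContinuousLinearMap.id ℝ E + (2 * h) • N)
    rw [Real.norm_eq_abs, abs_of_pos (by norm_num : (0:ℝ) < (2:ℝ)⁻¹)] at h1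
    calc ‖(2⁻¹:ℝ) • (ContinuousLinearMap.id ℝ E + (2 * h) • M + (ContinuousLinearMap.id ℝ E + (2 * h) • N))‖
        ≤ 2⁻¹ * ‖ContinuousLinearMap.id ℝ E + (2 * h) • M + (ContinuousLinearMap.id ℝ E + (2 * h) • N)‖ := h1
      _ ≤ 2⁻¹ * (a + b) := by rw [ha, hb]; linarith
      _ = (a + b) / 2 := by ring
  have h2h : (0:ℝ) < 2 * h := by linarith
  rw [div_le_iff₀ hh, add_mul, div_mul_eq_mul_div, div_mul_eq_mul_div, ← add_div,
    le_div_iff₀ h2h]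
  nlinarith

end mu


theorem slope_norm_bound {E : Type*} [NormedAddCommGroup E] [NormedSpace ℝ E]
    (μ : (E →L[ℝ] E) → ℝ)
    (hμ : ∀ M : E →L[ℝ] E,
      Tendsto (fun h : ℝ => (‖ContinuousLinearMap.id ℝ E + h • M‖ - 1) / h)
        (𝓝[>] 0) (𝓝 (μ M)))
    {x : ℝ → E} {t : ℝ} {M : E →L[ℝ] E} {v : E}
    (hx : HasDerivAt x (M (x t) + v) t) {r : ℝ} (hr : μ M * ‖x t‖ + ‖v‖ < r) :
    ∀ᶠ z in 𝓝[>] t, slope (fun s => ‖x s‖) t z < r := by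
  set d := M (x t) + v with hd
  -- little-o term
  have hlo : (fun z => x z - x t - (z - t) • d) =o[𝓝 t] fun z => z - t :=
    hx.isLittleO
  have ho : Tendsto (fun z => ‖x z - x t - (z - t) • d‖ / (z - t)) (𝓝 t) (𝓝 0) := by
    have := hlo.norm_left
    exact this.tendsto_div_nhds_zero
  have hsub : Tendsto (fun z => z - t) (𝓝[>] t) (𝓝[>] 0) := by
    apply tendsto_nhdsWithin_of_tendsto_nhds_of_eventually_within
    · have : Tendsto (fun z : ℝ => z - t) (𝓝 t) (𝓝 (t - t)) :=
        (continuous_id.sub continuous_const).tendsto t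
      simpa using this.mono_left nhdsWithin_le_nhds
    · filter_upwards [self_mem_nhdsWithin] with z (hz : t < z)
      exact sub_pos.2 hz
  have hμt : Tendsto (fun z => (‖ContinuousLinearMap.id ℝ E + (z - t) • M‖ - 1) / (z - t))
      (𝓝[>] t) (𝓝 (μ M)) := (hμ M).comp hsub
  set φ : ℝ → ℝ := fun z =>
    ((‖ContinuousLinearMap.id ℝ E + (z - t) • M‖ - 1) / (z - t)) * ‖x t‖ + ‖v‖
      + ‖x z - x t - (z - t) • d‖ / (z - t) with hφ
  have hφt : Tendsto φ (𝓝[>] t) (𝓝 (μ M * ‖x t‖ + ‖v‖ + 0)) := by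
    exact ((hμt.mul_const _).add_const _).add (ho.mono_left nhdsWithin_le_nhds)
  rw [add_zero] at hφt
  have hev : ∀ᶠ z in 𝓝[>] t, φ z < r := hφt.eventually_lt_const hr
  filter_upwards [hev, self_mem_nhdsWithin] with z hφz (hz : t < z)
  have hh : 0 < z - t := sub_pos.2 hz
  refine lt_of_le_of_lt ?_ hφz
  rw [slope_def_field]
  -- slope (fun s => ‖x s‖) t z = (‖x z‖ - ‖x t‖)/(z - t)
  have key : ‖x z‖ ≤ ‖ContinuousLinearMap.id ℝ E + (z - t) • M‖ * ‖x t‖ + (z - t) * ‖v‖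
      + ‖x z - x t - (z - t) • d‖ := by
    have e : x z = ((ContinuousLinearMap.id ℝ E + (z - t) • M) (x t) + (z - t) • v)
        + (x z - x t - (z - t) • d) := by
      simp only [ContinuousLinearMap.add_apply, ContinuousLinearMap.id_apply,
        ContinuousLinearMap.smul_apply, hd, smul_add]
      abel
    calc ‖x z‖ = ‖((ContinuousLinearMap.id ℝ E + (z - t) • M) (x t) + (z - t) • v)
        + (x z - x t - (z - t) • d)‖ := by rw [← e]
      _ ≤ ‖(ContinuousLinearMap.id ℝ E + (z - t) • M) (x t)‖ + ‖(z - t) • v‖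
          + ‖x z - x t - (z - t) • d‖ := by
            exact le_trans (norm_add_le _ _) (by gcongr; exact norm_add_le _ _)
      _ ≤ ‖ContinuousLinearMap.id ℝ E + (z - t) • M‖ * ‖x t‖ + (z - t) * ‖v‖
          + ‖x z - x t - (z - t) • d‖ := by
            gcongr
            · exact ContinuousLinearMap.le_opNorm _ _
            · rw [norm_smul, Real.norm_eq_abs, abs_of_pos hh]
  rw [div_le_iff₀ hh]
  have expand : φ z * (z - t) = (‖ContinuousLinearMap.id ℝ E + (z - t) • M‖ - 1) * ‖x t‖
      + (z - t) * ‖v‖ + ‖x z - x t - (z - t) • d‖ := by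
    rw [hφ]
    field_simp
  rw [expand]
  show ‖x z‖ - ‖x t‖ ≤ _
  nlinarith [key]

theorem cont_int_hasDerivAt {f : ℝ → ℝ} (hf : Continuous f) (a t : ℝ) :
    HasDerivAt (fun u => ∫ s in a..u, f s) (f t) t :=
  intervalIntegral.integral_hasDerivAt_right (hf.intervalIntegrable a t)
    (hf.stronglyMeasurableAtFilter _ _) hf.continuousAt

/-- Theorem 3 of the paper: consider
`ẋ = [A(t) + Δ(t) + BK(t)]x + ω(x,t)` on `[t₀,∞)`. Assume
(A1) `∫_{t₀}^∞ |μ[Δ(s)]| ds < ∞`;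
(A2) `μ[A(t)+BK(t)] < 0` for all sufficiently large `t`;
(A3) `‖ω(x,t)‖ ≤ w(t)` for all `x, t` with `w` continuous and `w(t)/μ[A(t)+BK(t)] → 0`;
(A4) `∫_{t₀}^t μ[A(s)+BK(s)] ds → −∞`.
Then every solution converges to `0` as `t → ∞`. -/
theorem stmt15 {E : Type*} [NormedAddCommGroup E] [NormedSpace ℝ E]
    (t₀ : ℝ) (A Δ K : ℝ → (E →L[ℝ] E)) (B : E →L[ℝ] E)
    (hA : ContinuousOn A (Set.Ici t₀)) (hΔ : ContinuousOn Δ (Set.Ici t₀))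
    (hK : ContinuousOn K (Set.Ici t₀))
    (ω : E → ℝ → E) (hω : Continuous fun p : E × ℝ => ω p.1 p.2)
    (μ : (E →L[ℝ] E) → ℝ)
    (hμ : ∀ M : E →L[ℝ] E,
      Tendsto (fun h : ℝ => (‖ContinuousLinearMap.id ℝ E + h • M‖ - 1) / h)
        (𝓝[>] 0) (𝓝 (μ M)))
    (hA1 : IntegrableOn (fun s => |μ (Δ s)|) (Set.Ici t₀))
    (hA2 : ∀ᶠ t in atTop, μ (A t + B ∘L K t) < 0)
    (w : ℝ → ℝ) (hw : ContinuousOn w (Set.Ici t₀))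
    (hA3bound : ∀ (x : E), ∀ t ≥ t₀, ‖ω x t‖ ≤ w t)
    (hA3lim : Tendsto (fun t => w t / μ (A t + B ∘L K t)) atTop (𝓝 0))
    (hA4 : Tendsto (fun t => ∫ s in t₀..t, μ (A s + B ∘L K s)) atTop atBot) :
    ∀ x : ℝ → E,
      (∀ t ≥ t₀, HasDerivAt x ((A t + Δ t + B ∘L K t) (x t) + ω (x t) t) t) →
      Tendsto x atTop (𝓝 0) := by
  intro x hx
  -- continuous extensions of coefficients via `max · t₀`
  set m : ℝ → ℝ := fun t => max t t₀ with hm_def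
  have hmc : Continuous m := continuous_id.max continuous_const
  have hms : ∀ t, m t ∈ Set.Ici t₀ := fun t => le_max_right t t₀
  have hmeq : ∀ t ≥ t₀, m t = t := fun t ht => max_eq_left ht
  have hlip := mu_lipschitz μ hμ
  have hcM : Continuous fun t => A (m t) + B ∘L K (m t) := by
    have hAc : Continuous fun t => A (m t) := hA.comp_continuous hmc hms
    have hKc : Continuous fun t => K (m t) := hK.comp_continuous hmc hms
    have hBK : Continuous fun t => B ∘L K (m t) :=
      ((ContinuousLinearMap.compL ℝ E E E B).continuous).comp hKc
    exact hAc.add hBK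
  set g : ℝ → ℝ := fun t => μ (A (m t) + B ∘L K (m t)) with hg_def
  have hgc : Continuous g := hlip.continuous.comp hcM
  set q : ℝ → ℝ := fun t => |μ (Δ (m t))| with hq_def
  have hqc : Continuous q :=
    continuous_abs.comp (hlip.continuous.comp (hΔ.comp_continuous hmc hms))
  have hq0 : ∀ t, 0 ≤ q t := fun t => abs_nonneg _
  set wc : ℝ → ℝ := fun t => w (m t) with hwc_def
  have hwcc : Continuous wc := hw.comp_continuous hmc hms
  have hwc0 : ∀ t, 0 ≤ wc t := fun t =>
    le_trans (norm_nonneg (ω 0 (m t))) (hA3bound 0 (m t) (hms t))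
  -- integrals of the coefficients
  set P : ℝ → ℝ := fun t => ∫ s in t₀..t, g s with hP_def
  set Q : ℝ → ℝ := fun t => ∫ s in t₀..t, q s with hQ_def
  set G : ℝ → ℝ := fun t => P t + Q t with hG_def
  have hPd : ∀ t, HasDerivAt P (g t) t := fun t => cont_int_hasDerivAt hgc t₀ t
  have hQd : ∀ t, HasDerivAt Q (q t) t := fun t => cont_int_hasDerivAt hqc t₀ t
  have hGd : ∀ t, HasDerivAt G (g t + q t) t := fun t => (hPd t).add (hQd t)
  have hPc : Continuous P := continuous_iff_continuousAt.2 fun t => (hPd t).continuousAt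
  have hGc : Continuous G := continuous_iff_continuousAt.2 fun t => (hGd t).continuousAt
  -- bound on Q
  have hqint : IntegrableOn q (Set.Ici t₀) := by
    refine hA1.congr_fun ?_ measurableSet_Ici
    intro s hs
    simp [hq_def, hmeq s hs]
  set Ca : ℝ := ∫ s in Set.Ici t₀, q s with hCa_def
  have hQle : ∀ t, t₀ ≤ t → Q t ≤ Ca := by
    intro t ht
    show (∫ s in t₀..t, q s) ≤ Ca
    rw [intervalIntegral.integral_of_le ht]
    refine setIntegral_mono_set hqint ?_ ?_
    · exact Eventually.of_forall fun s => hq0 s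
    · exact HasSubset.Subset.eventuallyLE fun s hs => le_of_lt hs.1
  have hQ0 : ∀ t, t₀ ≤ t → 0 ≤ Q t := fun t ht =>
    intervalIntegral.integral_nonneg ht fun u _ => hq0 u
  -- MAIN GRONWALL BOUND
  have main : ∀ t, t₀ ≤ t →
      ‖x t‖ ≤ Real.exp (G t) * (‖x t₀‖ + ∫ s in t₀..t, Real.exp (-G s) * wc s) := by
    intro t ht
    set c1 : ℝ := Real.exp (G t) * (1 + ∫ s in t₀..t, Real.exp (-G s)) with hc1_def
    have hGt0 : G t₀ = 0 := by
      simp [hG_def, hP_def, hQ_def, intervalIntegral.integral_same]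
    have key : ∀ δ, 0 < δ →
        ‖x t‖ ≤ Real.exp (G t) * (‖x t₀‖ + ∫ s in t₀..t, Real.exp (-G s) * wc s) + δ * c1 := by
      intro δ hδ
      set F : ℝ → ℝ := fun u => ∫ s in t₀..u, Real.exp (-G s) * (wc s + δ) with hF_def
      have hFc : Continuous fun s => Real.exp (-G s) * (wc s + δ) :=
        (hGc.neg.rexp).mul (hwcc.add continuous_const)
      have hFd : ∀ u, HasDerivAt F (Real.exp (-G u) * (wc u + δ)) u := fun u =>
        cont_int_hasDerivAt hFc t₀ u
      set Bf : ℝ → ℝ := fun u => Real.exp (G u) * (‖x t₀‖ + δ + F u) with hBf_def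
      set Bf' : ℝ → ℝ := fun u => (g u + q u) * Bf u + (wc u + δ) with hBf'_def
      have hBd : ∀ u, HasDerivAt Bf (Bf' u) u := by
        intro u
        have h1 : HasDerivAt (fun u => Real.exp (G u)) (Real.exp (G u) * (g u + q u)) u :=
          (hGd u).exp
        have h2 : HasDerivAt (fun u => ‖x t₀‖ + δ + F u) (Real.exp (-G u) * (wc u + δ)) u :=
          (hFd u).const_add _
        have h3 := h1.mul h2
        have e : Real.exp (G u) * Real.exp (-G u) = 1 := by
          rw [← Real.exp_add]; simp
        refine h3.congr_deriv ?_
        symm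
        simp only [hBf'_def, hBf_def]
        linear_combination (-(wc u + δ)) * e
      have comp : ∀ u ∈ Set.Icc t₀ t, ‖x u‖ ≤ Bf u := by
        have := image_le_of_liminf_slope_right_lt_deriv_boundary
          (f := fun s => ‖x s‖)
          (f' := fun u => μ (A u + Δ u + B ∘L K u) * ‖x u‖ + ‖ω (x u) u‖)
          (a := t₀) (b := t) (B := Bf) (B' := Bf')
          ?hf ?hf' ?ha hBd ?bound
        · exact fun u hu => this hu
        case hf =>
          intro s hs
          exact ((hx s hs.1).continuousAt.norm).continuousWithinAt
        case hf' =>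
          intro u hu r hr
          exact (slope_norm_bound μ hμ (hx u hu.1) hr).frequently
        case ha =>
          have hF0 : F t₀ = 0 := by simp [hF_def, intervalIntegral.integral_same]
          simp only [hBf_def, hF0, hGt0, Real.exp_zero, one_mul, add_zero]
          linarith
        case bound =>
          intro u hu heq
          have hu0 : t₀ ≤ u := hu.1
          have hmu : μ (A u + Δ u + B ∘L K u) ≤ g u + q u := by
            have e : A u + Δ u + B ∘L K u = (A u + B ∘L K u) + Δ u := by abel
            rw [e]
            refine le_trans (mu_add_le μ hμ _ _) ?_
            have h1 : μ (A u + B ∘L K u) = g u := by simp [hg_def, hmeq u hu0]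
            have h2 : μ (Δ u) ≤ q u := by
              rw [hq_def]; simp only [hmeq u hu0]; exact le_abs_self _
            linarith
          have hωb : ‖ω (x u) u‖ ≤ wc u := by
            rw [hwc_def]; simp only [hmeq u hu0]; exact hA3bound (x u) u hu0
          have heq' : ‖x u‖ = Bf u := heq
          calc μ (A u + Δ u + B ∘L K u) * ‖x u‖ + ‖ω (x u) u‖
              ≤ (g u + q u) * ‖x u‖ + wc u :=
                add_le_add (mul_le_mul_of_nonneg_right hmu (norm_nonneg _)) hωb
            _ = (g u + q u) * Bf u + wc u := by rw [heq']
            _ < Bf' u := by rw [hBf'_def]; simp only; linarith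
      have hcomp := comp t ⟨ht, le_refl t⟩
      have hFt : F t = (∫ s in t₀..t, Real.exp (-G s) * wc s)
          + δ * ∫ s in t₀..t, Real.exp (-G s) := by
        rw [hF_def]
        simp only
        rw [show (fun s => Real.exp (-G s) * (wc s + δ))
            = fun s => Real.exp (-G s) * wc s + δ * Real.exp (-G s) from
          funext fun s => by ring]
        rw [intervalIntegral.integral_add (f := fun s => Real.exp (-G s) * wc s)
          (g := fun s => δ * Real.exp (-G s)) ((hGc.neg.rexp.mul hwcc).intervalIntegrable _ _)
          ((continuous_const.mul hGc.neg.rexp).intervalIntegrable _ _),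
          intervalIntegral.integral_const_mul]
      have : Bf t = Real.exp (G t) * (‖x t₀‖ + ∫ s in t₀..t, Real.exp (-G s) * wc s)
          + δ * c1 := by
        rw [hBf_def]
        simp only
        rw [hFt, hc1_def]
        ring
      linarith [hcomp, this.symm.le]
    -- let δ → 0
    have htd : Tendsto (fun δ : ℝ =>
        Real.exp (G t) * (‖x t₀‖ + ∫ s in t₀..t, Real.exp (-G s) * wc s) + δ * c1)
        (𝓝[>] 0) (𝓝 (Real.exp (G t) * (‖x t₀‖ + ∫ s in t₀..t, Real.exp (-G s) * wc s))) := by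
      have : Tendsto (fun δ : ℝ =>
          Real.exp (G t) * (‖x t₀‖ + ∫ s in t₀..t, Real.exp (-G s) * wc s) + δ * c1)
          (𝓝 0) (𝓝 (Real.exp (G t) * (‖x t₀‖ + ∫ s in t₀..t, Real.exp (-G s) * wc s)
            + 0 * c1)) :=
        (continuous_const.add (continuous_id.mul continuous_const)).tendsto 0
      rw [zero_mul, add_zero] at this
      exact this.mono_left nhdsWithin_le_nhds
    refine ge_of_tendsto htd ?_
    filter_upwards [self_mem_nhdsWithin] with δ (hδ : 0 < δ)
    exact key δ hδ
  -- ASYMPTOTIC PART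
  have hPeq : ∀ t, t₀ ≤ t → P t = ∫ s in t₀..t, μ (A s + B ∘L K s) := by
    intro t ht
    rw [hP_def]
    apply intervalIntegral.integral_congr
    intro s hs
    rw [Set.uIcc_of_le ht] at hs
    simp [hg_def, hmeq s hs.1]
  have hPbot : Tendsto P atTop atBot := by
    refine hA4.congr' ?_
    filter_upwards [eventually_ge_atTop t₀] with t ht
    exact (hPeq t ht).symm
  have hPexp : Tendsto (fun t => Real.exp (P t)) atTop (𝓝 0) :=
    Real.tendsto_exp_atBot.comp hPbot
  set Ieg : ℝ → ℝ := fun t => Real.exp (P t) * ∫ s in t₀..t, Real.exp (-P s) * wc s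
    with hIeg_def
  have hewc : Continuous fun s => Real.exp (-P s) * wc s := (hPc.neg.rexp).mul hwcc
  -- upper bound in terms of P and Ieg
  have hUb : ∀ t, t₀ ≤ t → ‖x t‖ ≤ Real.exp Ca * (Real.exp (P t) * ‖x t₀‖ + Ieg t) := by
    intro t ht
    have h1 := main t ht
    have hInt : (∫ s in t₀..t, Real.exp (-G s) * wc s)
        ≤ ∫ s in t₀..t, Real.exp (-P s) * wc s := by
      refine intervalIntegral.integral_mono_on ht
        ((hGc.neg.rexp.mul hwcc).intervalIntegrable _ _)
        (hewc.intervalIntegrable _ _) ?_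
      intro s hs
      have hq := hQ0 s hs.1
      have : -G s ≤ -P s := by rw [hG_def]; simp only; linarith
      exact mul_le_mul_of_nonneg_right (Real.exp_le_exp.2 this) (hwc0 s)
    have hexp : Real.exp (G t) ≤ Real.exp Ca * Real.exp (P t) := by
      rw [← Real.exp_add]
      refine Real.exp_le_exp.2 ?_
      have := hQle t ht
      rw [hG_def]; simp only; linarith
    have hnn : 0 ≤ ‖x t₀‖ + ∫ s in t₀..t, Real.exp (-G s) * wc s := by
      have : 0 ≤ ∫ s in t₀..t, Real.exp (-G s) * wc s :=
        intervalIntegral.integral_nonneg ht fun u _ =>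
          mul_nonneg (Real.exp_nonneg _) (hwc0 u)
      positivity
    calc ‖x t‖ ≤ Real.exp (G t) * (‖x t₀‖ + ∫ s in t₀..t, Real.exp (-G s) * wc s) := h1
      _ ≤ (Real.exp Ca * Real.exp (P t))
          * (‖x t₀‖ + ∫ s in t₀..t, Real.exp (-P s) * wc s) := by
        refine mul_le_mul hexp ?_ hnn ?_
        · linarith
        · positivity
      _ = Real.exp Ca * (Real.exp (P t) * ‖x t₀‖ + Ieg t) := by
        rw [hIeg_def]; ring
  -- Ieg tends to 0
  have hIeg0 : Tendsto Ieg atTop (𝓝 0) := by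
    rw [NormedAddCommGroup.tendsto_nhds_zero]
    intro ε hε
    have hε2 : 0 < ε / 2 := by linarith
    have hev : ∀ᶠ s in atTop, t₀ ≤ s ∧ g s < 0 ∧ wc s ≤ ε / 2 * (-g s) := by
      have h3 := (NormedAddCommGroup.tendsto_nhds_zero.1 hA3lim) (ε / 2) hε2
      filter_upwards [hA2, h3, eventually_ge_atTop t₀] with s h2 h3s h0
      have hgs : g s = μ (A s + B ∘L K s) := by simp [hg_def, hmeq s h0]
      have hws : wc s = w s := by simp [hwc_def, hmeq s h0]
      refine ⟨h0, by rw [hgs]; exact h2, ?_⟩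
      rw [hws, hgs]
      have hwpos : 0 ≤ w s := by rw [← hws]; exact hwc0 s
      have hμneg : μ (A s + B ∘L K s) < 0 := h2
      rw [Real.norm_eq_abs, abs_div, abs_of_nonneg hwpos, abs_of_neg hμneg] at h3s
      have hpos : 0 < -μ (A s + B ∘L K s) := neg_pos.2 hμneg
      rw [div_lt_iff₀ hpos] at h3s
      linarith
    obtain ⟨T, hT⟩ := eventually_atTop.1 hev
    have hT0 : t₀ ≤ T := (hT T le_rfl).1
    set KT : ℝ := ∫ s in t₀..T, Real.exp (-P s) * wc s with hKT_def
    have hev1 : ∀ᶠ t in atTop, Real.exp (P t) * KT < ε / 2 := by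
      have h := hPexp.mul_const KT
      rw [zero_mul] at h
      exact h.eventually_lt_const hε2
    filter_upwards [hev1, eventually_ge_atTop T] with t h1 hTt
    have htt0 : t₀ ≤ t := hT0.trans hTt
    have hsplit : (∫ s in t₀..t, Real.exp (-P s) * wc s)
        = KT + ∫ s in T..t, Real.exp (-P s) * wc s := by
      rw [hKT_def]
      exact (intervalIntegral.integral_add_adjacent_intervals
        (hewc.intervalIntegrable _ _) (hewc.intervalIntegrable _ _)).symm
    have htail : (∫ s in T..t, Real.exp (-P s) * wc s)
        ≤ ε / 2 * (Real.exp (-P t) - Real.exp (-P T)) := by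
      have hcmp : (∫ s in T..t, Real.exp (-P s) * wc s)
          ≤ ∫ s in T..t, ε / 2 * (Real.exp (-P s) * (-g s)) := by
        refine intervalIntegral.integral_mono_on hTt
          (hewc.intervalIntegrable _ _)
          ((continuous_const.mul (hPc.neg.rexp.mul hgc.neg)).intervalIntegrable _ _) ?_
        intro s hs
        have hTs := hT s hs.1
        have hwle : wc s ≤ ε / 2 * (-g s) := hTs.2.2
        have hexp0 : 0 ≤ Real.exp (-P s) := Real.exp_nonneg _
        nlinarith
      have hFTC : (∫ s in T..t, Real.exp (-P s) * (-g s))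
          = Real.exp (-P t) - Real.exp (-P T) := by
        have hd : ∀ s ∈ Set.uIcc T t,
            HasDerivAt (fun u => Real.exp (-P u)) (Real.exp (-P s) * (-g s)) s := by
          intro s _
          exact ((hPd s).neg).exp
        exact intervalIntegral.integral_eq_sub_of_hasDerivAt hd
          ((hPc.neg.rexp.mul hgc.neg).intervalIntegrable _ _)
      rw [intervalIntegral.integral_const_mul] at hcmp
      rw [hFTC] at hcmp
      exact hcmp
    have hIval : Ieg t ≤ Real.exp (P t) * KT + ε / 2 := by
      have he1 : Real.exp (P t) * Real.exp (-P t) = 1 := by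
        rw [← Real.exp_add]; simp
      have hexp0 : 0 ≤ Real.exp (P t) := Real.exp_nonneg _
      have hexpT : 0 < Real.exp (-P T) := Real.exp_pos _
      rw [hIeg_def]
      simp only
      rw [hsplit]
      nlinarith [mul_le_mul_of_nonneg_left htail hexp0,
        mul_nonneg hexp0 hexpT.le]
    have hInn : 0 ≤ Ieg t := by
      rw [hIeg_def]
      simp only
      refine mul_nonneg (Real.exp_nonneg _) ?_
      exact intervalIntegral.integral_nonneg htt0 fun u _ =>
        mul_nonneg (Real.exp_nonneg _) (hwc0 u)
    rw [Real.norm_eq_abs, abs_of_nonneg hInn]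
    linarith
  -- squeeze
  have hU : Tendsto (fun t => Real.exp Ca * (Real.exp (P t) * ‖x t₀‖ + Ieg t)) atTop
      (𝓝 (Real.exp Ca * (0 * ‖x t₀‖ + 0))) :=
    tendsto_const_nhds.mul ((hPexp.mul_const _).add hIeg0)
  rw [zero_mul, zero_add, mul_zero] at hU
  have hnorm : Tendsto (fun t => ‖x t‖) atTop (𝓝 0) := by
    refine squeeze_zero' (Eventually.of_forall fun t => norm_nonneg _) ?_ hU
    filter_upwards [eventually_ge_atTop t₀] with t ht
    exact hUb t ht
  exact tendsto_zero_iff_norm_tendsto_zero.2 hnorm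
end
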